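/- Let γ : [0,1] → Sp(2n) be a positive path. Then there exists ε > 0 such that for every θ ∈ (−ε, ε), the path t ↦ γ(t)·R₂ₙ(θt) is also a positive path, where R₂ₙ(α) = diag(R(α),…,R(α)) is the block-diagonal matrix consisting of n copies of the 2×2 rotation matrix R(α). -/

import Mathlib

open Matrix Set

noncomputable section

def J2 : Matrix (Fin 2) (Fin 2) ℝ := !![0, -1; 1, 0]

/-- The standard symplectic matrix `J = diag(J₂, …, J₂)`. -/
def Jn (n : ℕ) : Matrix (Fin 2 × Fin n) (Fin 2 × Fin n) ℝ :=
  Matrix.blockDiagonal fun _ => J2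

/-- The 2×2 rotation matrix `R(α)`. -/
def Rot (α : ℝ) : Matrix (Fin 2) (Fin 2) ℝ :=
  !![Real.cos α, -Real.sin α; Real.sin α, Real.cos α]

/-- `R₂ₙ(α) = diag(R(α), …, R(α))`. -/
def Rot2n (n : ℕ) (α : ℝ) : Matrix (Fin 2 × Fin n) (Fin 2 × Fin n) ℝ :=
  Matrix.blockDiagonal fun _ => Rot α

lemma J2_transpose : J2ᵀ = -J2 := by
  ext i j; fin_cases i <;> fin_cases j <;> simp [J2]

lemma J2_mul_J2 : J2 * J2 = -1 := by
  ext i j; fin_cases i <;> fin_cases j <;>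
    simp [J2, Matrix.mul_apply, Fin.sum_univ_two]

lemma Jn_transpose (n : ℕ) : (Jn n)ᵀ = -(Jn n) := by
  rw [Jn, blockDiagonal_transpose,
    show (fun _ : Fin n => J2ᵀ) = -(fun _ : Fin n => J2) from funext fun _ => J2_transpose,
    blockDiagonal_neg]

lemma Jn_mul_Jn (n : ℕ) : Jn n * Jn n = -1 := by
  rw [Jn, ← blockDiagonal_mul,
    show (fun _ : Fin n => J2 * J2) = -(fun _ : Fin n => (1 : Matrix (Fin 2) (Fin 2) ℝ))
      from funext fun _ => J2_mul_J2,
    blockDiagonal_neg, show blockDiagonal (fun _ : Fin n => (1 : Matrix (Fin 2) (Fin 2) ℝ)) = 1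
      from blockDiagonal_one]

lemma J2_mul_Rot (α : ℝ) :
    J2 * Rot α = !![-Real.sin α, -Real.cos α; Real.cos α, -Real.sin α] := by
  ext i j; fin_cases i <;> fin_cases j <;>
    simp [J2, Rot, Matrix.mul_apply, Fin.sum_univ_two]

lemma rot_deriv (θ t : ℝ) (a b : Fin 2) :
    HasDerivAt (fun s => Rot (θ * s) a b) (θ * (J2 * Rot (θ * t)) a b) t := by
  have hl : HasDerivAt (fun s : ℝ => θ * s) θ t := by
    simpa using (hasDerivAt_id t).const_mul θ
  have hc : HasDerivAt (fun s => Real.cos (θ * s)) (-Real.sin (θ * t) * θ) t :=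
    (Real.hasDerivAt_cos (θ * t)).comp t hl
  have hs : HasDerivAt (fun s => Real.sin (θ * s)) (Real.cos (θ * t) * θ) t :=
    (Real.hasDerivAt_sin (θ * t)).comp t hl
  rw [J2_mul_Rot]
  fin_cases a <;> fin_cases b <;> simp [Rot]
  · convert hc using 1; ring
  · refine hs.fun_neg.congr_deriv ?_; ring
  · convert hs using 1; ring
  · convert hc using 1; ring

lemma rot2n_deriv (n : ℕ) (θ t : ℝ) (k j : Fin 2 × Fin n) :
    HasDerivAt (fun s => Rot2n n (θ * s) k j) ((θ • (Jn n * Rot2n n (θ * t))) k j) t := by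
  have hJR : Jn n * Rot2n n (θ * t) = blockDiagonal fun _ : Fin n => J2 * Rot (θ * t) := by
    rw [Jn, Rot2n, ← blockDiagonal_mul]
  obtain ⟨a, ka⟩ := k; obtain ⟨b, kb⟩ := j
  rw [hJR]
  simp only [Rot2n, Matrix.smul_apply, blockDiagonal_apply, smul_eq_mul]
  by_cases h : ka = kb
  · simp only [h, if_true, if_pos rfl]
    exact rot_deriv θ t a b
  · simp only [h, if_false, if_neg h, mul_zero]
    exact hasDerivAt_const t 0

lemma entry_cont_mul {m : Type*} [Fintype m] {M N : ℝ → Matrix m m ℝ} {s : Set ℝ}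
    (hM : ∀ i j, ContinuousOn (fun t => M t i j) s)
    (hN : ∀ i j, ContinuousOn (fun t => N t i j) s) :
    ∀ i j, ContinuousOn (fun t => (M t * N t) i j) s := by
  intro i j
  simp only [Matrix.mul_apply]
  exact continuousOn_finset_sum _ fun k _ => (hM i k).mul (hN k j)

/-- If `γ` is a positive path in `Sp(2n)`, then there is `ε > 0` such that for every
`θ ∈ (−ε, ε)` the path `t ↦ γ(t) · R₂ₙ(θt)` is again a positive path. -/
theorem perturbation_by_rotation_is_positive {n : ℕ}
    (γ P : ℝ → Matrix (Fin 2 × Fin n) (Fin 2 × Fin n) ℝ)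
    (hsp : ∀ t ∈ Icc (0:ℝ) 1, (γ t)ᵀ * Jn n * γ t = Jn n)
    (hPc : ∀ i j, ContinuousOn (fun t => P t i j) (Icc (0:ℝ) 1))
    (hP : ∀ t ∈ Icc (0:ℝ) 1, (P t)ᵀ = P t ∧ (P t).PosDef)
    (hd : ∀ t ∈ Icc (0:ℝ) 1, ∀ i j,
      HasDerivAt (fun s => γ s i j) ((Jn n * P t * γ t) i j) t) :
    ∃ ε > (0:ℝ), ∀ θ ∈ Ioo (-ε) ε,
      ∃ P' : ℝ → Matrix (Fin 2 × Fin n) (Fin 2 × Fin n) ℝ,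
        ∀ t ∈ Icc (0:ℝ) 1, (P' t)ᵀ = P' t ∧ (P' t).PosDef ∧
          ∀ i j, HasDerivAt (fun s => (γ s * Rot2n n (θ * s)) i j)
            ((Jn n * P' t * (γ t * Rot2n n (θ * t))) i j) t := by
  classical
  set A : ℝ → Matrix (Fin 2 × Fin n) (Fin 2 × Fin n) ℝ := fun t => (γ t)ᵀ * Jn n with hA
  set Q : ℝ → Matrix (Fin 2 × Fin n) (Fin 2 × Fin n) ℝ := fun t => (A t)ᵀ * A t with hQdef
  have hQsym : ∀ t, (Q t)ᵀ = Q t := by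
    intro t; simp only [hQdef]; rw [transpose_mul, transpose_transpose]
  -- key identity
  have hkey : ∀ t ∈ Icc (0:ℝ) 1, Jn n * Q t * γ t = γ t * Jn n := by
    intro t ht
    have h1 : (Q t) = -(Jn n) * γ t * ((γ t)ᵀ * Jn n) := by
      simp only [hQdef, hA]; rw [transpose_mul, transpose_transpose, Jn_transpose]
    rw [h1]
    have h2 : Jn n * (-(Jn n) * γ t * ((γ t)ᵀ * Jn n)) * γ t
        = -(Jn n * Jn n) * (γ t * ((γ t)ᵀ * Jn n * γ t)) := by noncomm_ring
    rw [h2, hsp t ht, Jn_mul_Jn]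
    noncomm_ring
  -- quadratic form of Q
  have hquad : ∀ (t : ℝ) (x : (Fin 2 × Fin n) → ℝ),
      x ⬝ᵥ (Q t) *ᵥ x = (A t *ᵥ x) ⬝ᵥ (A t *ᵥ x) := by
    intro t x
    simp only [hQdef]; rw [← mulVec_mulVec, dotProduct_mulVec, vecMul_transpose]
  have hquad_nonneg : ∀ (t : ℝ) (x : (Fin 2 × Fin n) → ℝ), 0 ≤ x ⬝ᵥ (Q t) *ᵥ x := by
    intro t x
    rw [hquad]
    exact Finset.sum_nonneg fun i _ => mul_self_nonneg _
  have hQpos : ∀ t ∈ Icc (0:ℝ) 1, ∀ x : (Fin 2 × Fin n) → ℝ, x ≠ 0 →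
      0 < x ⬝ᵥ (Q t) *ᵥ x := by
    intro t ht x hx
    rw [hquad]
    have hinv : A t * (γ t * (-(Jn n))) = 1 := by
      have h3 : A t * (γ t * (-(Jn n))) = -((γ t)ᵀ * Jn n * γ t * Jn n) := by
        simp only [hA]; noncomm_ring
      rw [h3, hsp t ht, Jn_mul_Jn]
      simp
    have hBA : (γ t * (-(Jn n))) * A t = 1 := mul_eq_one_comm.mp hinv
    have hAx : A t *ᵥ x ≠ 0 := by
      intro h0
      apply hx
      have h4 : (γ t * (-(Jn n))) *ᵥ (A t *ᵥ x) = x := by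
        rw [mulVec_mulVec, hBA, one_mulVec]
      rw [h0, mulVec_zero] at h4
      exact h4.symm
    have := dotProduct_star_self_pos_iff.mpr hAx
    simpa using this
  -- continuity of entries of Q
  have hγc : ∀ i j, ContinuousOn (fun t => γ t i j) (Icc (0:ℝ) 1) :=
    fun i j t ht => ((hd t ht i j).continuousAt).continuousWithinAt
  have hγtc : ∀ i j, ContinuousOn (fun t => (γ t)ᵀ i j) (Icc (0:ℝ) 1) := fun i j => hγc j i
  have hAc : ∀ i j, ContinuousOn (fun t => A t i j) (Icc (0:ℝ) 1) := by
    intro i j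
    have := entry_cont_mul (M := fun t => (γ t)ᵀ) (N := fun _ => Jn n) hγtc
      (fun i j => continuousOn_const) i j
    simpa [hA] using this
  have hAtc : ∀ i j, ContinuousOn (fun t => (A t)ᵀ i j) (Icc (0:ℝ) 1) := fun i j => hAc j i
  have hQc : ∀ i j, ContinuousOn (fun t => Q t i j) (Icc (0:ℝ) 1) := by
    intro i j
    have := entry_cont_mul (M := fun t => (A t)ᵀ) (N := A) hAtc hAc i j
    simpa [hQdef] using this
  -- derivative of the perturbed path
  have hpderiv : ∀ θ : ℝ, ∀ t ∈ Icc (0:ℝ) 1, ∀ i j,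
      HasDerivAt (fun s => (γ s * Rot2n n (θ * s)) i j)
        (((Jn n * P t * γ t) * Rot2n n (θ * t)
          + θ • (γ t * (Jn n * Rot2n n (θ * t)))) i j) t := by
    intro θ t ht i j
    have h := HasDerivAt.fun_sum (u := Finset.univ)
      (fun k _ => ((hd t ht i k).fun_mul (rot2n_deriv n θ t k j)))
    have hfun : (fun s => (γ s * Rot2n n (θ * s)) i j)
        = fun s => ∑ k, γ s i k * Rot2n n (θ * s) k j := by
      funext s; rw [Matrix.mul_apply]
    rw [hfun]
    refine h.congr_deriv ?_
    simp only [Matrix.add_apply, Matrix.mul_apply, Matrix.smul_apply, smul_eq_mul,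
      Finset.sum_add_distrib, Finset.mul_sum]
    ring_nf
  rcases isEmpty_or_nonempty (Fin 2 × Fin n) with he | he
  · exact ⟨1, one_pos, fun θ hθ => ⟨P, fun t ht => ⟨(hP t ht).1, (hP t ht).2,
      fun i j => (he.elim i)⟩⟩⟩
  · -- compactness
    set K := (Icc (0:ℝ) 1) ×ˢ (Metric.sphere (0 : (Fin 2 × Fin n) → ℝ) 1) with hK
    have hKc : IsCompact K := isCompact_Icc.prod (isCompact_sphere 0 1)
    have hKne : K.Nonempty := by
      obtain ⟨u, hu⟩ := (NormedSpace.sphere_nonempty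
        (E := (Fin 2 × Fin n) → ℝ) (x := 0) (r := 1)).mpr zero_le_one
      exact ⟨(0, u), ⟨left_mem_Icc.mpr zero_le_one, hu⟩⟩
    have contquad : ∀ (M : ℝ → Matrix (Fin 2 × Fin n) (Fin 2 × Fin n) ℝ),
        (∀ i j, ContinuousOn (fun t => M t i j) (Icc (0:ℝ) 1)) →
        ContinuousOn (fun p : ℝ × ((Fin 2 × Fin n) → ℝ) => p.2 ⬝ᵥ (M p.1) *ᵥ p.2) K := by
      intro M hM
      simp only [dotProduct, Matrix.mulVec]
      apply continuousOn_finset_sum; intro i _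
      apply ContinuousOn.mul
      · exact ((continuous_apply i).comp continuous_snd).continuousOn
      · apply continuousOn_finset_sum; intro j _
        exact ((hM i j).comp continuous_fst.continuousOn (fun p hp => hp.1)).mul
          ((continuous_apply j).comp continuous_snd).continuousOn
    obtain ⟨p₀, hp₀, hmin⟩ := hKc.exists_isMinOn hKne (contquad P hPc)
    obtain ⟨q₀, hq₀, hmax⟩ := hKc.exists_isMaxOn hKne (contquad Q hQc)
    set m := p₀.2 ⬝ᵥ (P p₀.1) *ᵥ p₀.2 with hm_def
    set M' := q₀.2 ⬝ᵥ (Q q₀.1) *ᵥ q₀.2 with hM'_def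
    have hp₀x : p₀.2 ≠ 0 := by
      intro h0
      have := hp₀.2
      rw [h0] at this
      simp at this
    have hm : 0 < m := by
      have := (hP p₀.1 hp₀.1).2.dotProduct_mulVec_pos hp₀x
      simpa using this
    have hM'0 : 0 ≤ M' := hquad_nonneg q₀.1 q₀.2
    have hden : (0:ℝ) < M' + 1 := by linarith
    refine ⟨m / (M' + 1), div_pos hm hden, fun θ hθ => ?_⟩
    obtain ⟨hθ1, hθ2⟩ := hθ
    set ε := m / (M' + 1) with hε_def
    have hε : 0 < ε := div_pos hm hden
    have hεM : ε * (M' + 1) = m := div_mul_cancel₀ m (ne_of_gt hden)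
    refine ⟨fun t => P t + θ • Q t, fun t ht => ?_⟩
    have hsym : (P t + θ • Q t)ᵀ = P t + θ • Q t := by
      rw [transpose_add, transpose_smul, (hP t ht).1, hQsym t]
    refine ⟨hsym, posDef_iff_dotProduct_mulVec.mpr ⟨(conjTranspose_eq_transpose_of_trivial _).trans hsym, ?_⟩, ?_⟩
    · -- positivity
      intro x hx
      have hc : (0:ℝ) < ‖x‖ := norm_pos_iff.mpr hx
      set u : (Fin 2 × Fin n) → ℝ := ‖x‖⁻¹ • x with hu_def
      have hu : ‖u‖ = 1 := by
        rw [hu_def, norm_smul, norm_inv, norm_norm, inv_mul_cancel₀ (ne_of_gt hc)]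
      have hxu : x = ‖x‖ • u := by
        rw [hu_def, smul_smul, mul_inv_cancel₀ (ne_of_gt hc), one_smul]
      have hmemK : (t, u) ∈ K := ⟨ht, by simpa using hu⟩
      have hFu : m ≤ u ⬝ᵥ (P t) *ᵥ u := hmin hmemK
      have hGu : u ⬝ᵥ (Q t) *ᵥ u ≤ M' := hmax hmemK
      have hGu0 : 0 ≤ u ⬝ᵥ (Q t) *ᵥ u := hquad_nonneg t u
      have hpos : 0 < u ⬝ᵥ (P t + θ • Q t) *ᵥ u := by
        have hexp : u ⬝ᵥ (P t + θ • Q t) *ᵥ u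
            = u ⬝ᵥ (P t) *ᵥ u + θ * (u ⬝ᵥ (Q t) *ᵥ u) := by
          rw [add_mulVec, dotProduct_add, smul_mulVec, dotProduct_smul, smul_eq_mul]
        rw [hexp]
        nlinarith [mul_nonneg (le_of_lt (by linarith : (0:ℝ) < ε + θ)) hGu0,
          mul_nonneg hε.le (sub_nonneg.mpr hGu)]
      have hscale : star x ⬝ᵥ (P t + θ • Q t) *ᵥ x
          = ‖x‖ * (‖x‖ * (u ⬝ᵥ (P t + θ • Q t) *ᵥ u)) := by
        rw [star_trivial, hxu, mulVec_smul, smul_dotProduct, dotProduct_smul]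
        simp only [smul_eq_mul]
        rw [← hxu]
      rw [hscale]
      positivity
    · -- derivative
      intro i j
      have hmat : Jn n * (P t + θ • Q t) * (γ t * Rot2n n (θ * t))
          = (Jn n * P t * γ t) * Rot2n n (θ * t)
            + θ • (γ t * (Jn n * Rot2n n (θ * t))) := by
        rw [mul_add, add_mul, Matrix.mul_smul, Matrix.smul_mul]
        congr 1
        · simp only [Matrix.mul_assoc]
        · congr 1
          simp only [← Matrix.mul_assoc]
          rw [hkey t ht]
      rw [hmat]
      exact hpderiv θ t ht i j
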